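/- Let T be a finite tree with at least two vertices, equipped with an edge-length function ℓ assigning a strictly positive real length to each edge, and suppose (T, ℓ) is short-branched. Let u and v be adjacent vertices of T. Then 1 − D(v,u) is strictly positive, and the quotient D(u,v)/(1 − D(v,u)) lies between 0 and 1 (inclusive). -/

import Mathlib

open scoped Classical
open Finset

noncomputable section

variable {V : Type*}

/-- A leaf of a graph is a vertex of degree one. -/
def IsLeafVertex [Fintype V] (G : SimpleGraph V) (v : V) : Prop := G.degree v = 1

/-- The finset of leaves of a graph. -/
def leafSet [Fintype V] (G : SimpleGraph V) : Finset V :=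
  Finset.univ.filter (fun v => IsLeafVertex G v)

/-- The length of a pseudometric graph: the sum of the lengths of its edges. -/
def totalLength [Fintype V] (G : SimpleGraph V) (ℓ : Sym2 V → ℝ) : ℝ :=
  ∑ e ∈ G.edgeFinset, ℓ e

/-- The leaf length of a tree: one less than its number of leaves. -/
def leafLength [Fintype V] (G : SimpleGraph V) : ℝ := ((leafSet G).card : ℝ) - 1

/-- `sideComp G u v` is the vertex set of the connected component containing `v` of the
graph obtained from `G` by deleting the vertex `u`: the set of vertices reachable from
`v` by a walk avoiding `u`. -/
def sideComp (G : SimpleGraph V) (u v : V) : Set V :=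
  {x | ∃ p : G.Walk v x, u ∉ p.support}

/-- The length of the subspace `T(u,v)`: the sum of the lengths of all edges having at
least one endpoint in `sideComp G u v`. -/
def sideLength [Fintype V] (G : SimpleGraph V) (ℓ : Sym2 V → ℝ) (u v : V) : ℝ :=
  ∑ e ∈ G.edgeFinset.filter (fun e => ∃ x ∈ e, x ∈ sideComp G u v), ℓ e

/-- The leaf length of the subspace `T(u,v)`: the number of leaves of `G` lying in
`sideComp G u v`. -/
def sideLeafCount [Fintype V] (G : SimpleGraph V) (u v : V) : ℕ :=
  ((leafSet G).filter (fun x => x ∈ sideComp G u v)).card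

/-- The deviation `D(u,v)`: the leaf length of `T(u,v)` minus the length of `T(u,v)`. -/
def deviation [Fintype V] (G : SimpleGraph V) (ℓ : Sym2 V → ℝ) (u v : V) : ℝ :=
  (sideLeafCount G u v : ℝ) - sideLength G ℓ u v

/-- The length of the branch at `(u,w)`: `ℓ {u,w}` plus the sum of the lengths of all
edges with both endpoints in `sideComp G u w`. -/
def branchLength [Fintype V] (G : SimpleGraph V) (ℓ : Sym2 V → ℝ) (u w : V) : ℝ :=
  ℓ s(u, w) + ∑ e ∈ G.edgeFinset.filter (fun e => ∀ x ∈ e, x ∈ sideComp G u w), ℓ e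

/-- A pseudometric tree is short-branched if its length equals its leaf length and the
length of every branch (at a vertex of degree at least 3) is at most its leaf length. -/
def ShortBranched [Fintype V] (G : SimpleGraph V) (ℓ : Sym2 V → ℝ) : Prop :=
  totalLength G ℓ = leafLength G ∧
  ∀ u w : V, 3 ≤ G.degree u → G.Adj u w →
    branchLength G ℓ u w ≤ (sideLeafCount G u w : ℝ)

/-- The product of the factors `D(vᵢ, vᵢ₊₁)/(1 − D(vᵢ₊₁, vᵢ))` along a list of vertices;
applied to the support of the unique path from `v` to `w` this gives the barycentric
coordinate `a(v,w)`. -/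
def pathProd [Fintype V] (G : SimpleGraph V) (ℓ : Sym2 V → ℝ) : List V → ℝ
  | a :: b :: rest =>
      (deviation G ℓ a b / (1 - deviation G ℓ b a)) * pathProd G ℓ (b :: rest)
  | _ => 1

section Aux

open SimpleGraph

variable {G : SimpleGraph V}

lemma sideComp_refl {u v : V} (h : u ≠ v) : v ∈ sideComp G u v :=
  ⟨Walk.nil, by simpa using h⟩

lemma not_mem_sideComp (G : SimpleGraph V) (u v : V) : u ∉ sideComp G u v := by
  rintro ⟨p, hp⟩
  exact hp p.end_mem_support

lemma sideComp_adj {u v x y : V} (hx : x ∈ sideComp G u v) (hxy : G.Adj x y)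
    (hy : y ≠ u) : y ∈ sideComp G u v := by
  obtain ⟨p, hp⟩ := hx
  refine ⟨p.concat hxy, ?_⟩
  rw [Walk.support_concat]
  simp only [List.concat_eq_append, List.mem_append, List.mem_singleton]
  rintro (h | h)
  · exact hp h
  · exact hy h.symm

lemma sideComp_trans {u v x y : V} (hx : x ∈ sideComp G u v) (hy : y ∈ sideComp G u x) :
    y ∈ sideComp G u v := by
  obtain ⟨p, hp⟩ := hx
  obtain ⟨q, hq⟩ := hy
  refine ⟨p.append q, ?_⟩
  rw [Walk.mem_support_append_iff]
  rintro (h | h)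
  · exact hp h
  · exact hq h

lemma sideComp_symm {u v x : V} (hx : x ∈ sideComp G u v) : v ∈ sideComp G u x := by
  obtain ⟨p, hp⟩ := hx
  exact ⟨p.reverse, by simpa [Walk.support_reverse] using hp⟩

lemma no_cross (hT : G.IsTree) {u v : V} (hadj : G.Adj u v) {x : V}
    (hx : x ∈ sideComp G u v) (hx' : x ∈ sideComp G v u) : False := by
  obtain ⟨p, hp⟩ := hx
  obtain ⟨q, hq⟩ := hx'
  have hb := (isAcyclic_iff_forall_adj_isBridge.mp hT.IsAcyclic) hadj
  rw [isBridge_iff_adj_and_forall_walk_mem_edges] at hb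
  have h2 := hb (q.append p.reverse)
  rw [Walk.edges_append, List.mem_append] at h2
  rcases h2 with h | h
  · exact hq (q.snd_mem_support_of_mem_edges h)
  · have := p.reverse.fst_mem_support_of_mem_edges h
    rw [Walk.support_reverse, List.mem_reverse] at this
    exact hp this

lemma adj_mem_sideComp (hT : G.IsTree) {u v x : V} (hadj : G.Adj u v)
    (hux : G.Adj u x) (hx : x ∈ sideComp G u v) : x = v := by
  by_contra hne
  obtain ⟨p, hp⟩ := hx
  have hb := (isAcyclic_iff_forall_adj_isBridge.mp hT.IsAcyclic) hadj
  rw [isBridge_iff_adj_and_forall_walk_mem_edges] at hb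
  have h2 := hb (Walk.cons hux p.reverse)
  rw [Walk.edges_cons, List.mem_cons] at h2
  rcases h2 with h | h
  · rcases Sym2.eq_iff.mp h with ⟨-, hvx⟩ | ⟨hux', -⟩
    · exact hne hvx.symm
    · exact hux.ne hux'
  · have := p.reverse.fst_mem_support_of_mem_edges h
    rw [Walk.support_reverse, List.mem_reverse] at this
    exact hp this

lemma exists_adj_sideComp (hT : G.IsTree) {u x : V} (hne : x ≠ u) :
    ∃ y, G.Adj u y ∧ x ∈ sideComp G u y := by
  obtain ⟨w⟩ := hT.isConnected.preconnected u x
  have hp : w.bypass.IsPath := w.bypass_isPath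
  generalize w.bypass = p at hp
  cases p with
  | nil => exact absurd rfl hne.symm
  | cons h q =>
    rw [Walk.cons_isPath_iff] at hp
    exact ⟨_, h, q, hp.2⟩

lemma sideComp_disjoint (hT : G.IsTree) {u v w x : V} (hv : G.Adj u v) (hw : G.Adj u w)
    (hne : w ≠ v) (hx : x ∈ sideComp G u v) (hx' : x ∈ sideComp G u w) : False :=
  hne (adj_mem_sideComp hT hv hw (sideComp_trans hx (sideComp_symm hx')))

lemma support_subset_sideComp [DecidableEq V] {u v x : V} (p : G.Walk v x)
    (hp : u ∉ p.support) : ∀ z ∈ p.support, z ∈ sideComp G u v := fun z hz =>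
  ⟨p.takeUntil z hz, fun h => hp (p.support_takeUntil_subset hz h)⟩

lemma sideComp_partition [DecidableEq V] (hT : G.IsTree) {u v : V} (hadj : G.Adj u v)
    (x : V) : x ∈ sideComp G u v ↔ x ∉ sideComp G v u := by
  constructor
  · intro h h'; exact no_cross hT hadj h h'
  · intro h
    by_cases hxu : x = u
    · subst hxu
      exact absurd (sideComp_refl hadj.ne') h
    · obtain ⟨y, hy, hxy⟩ := exists_adj_sideComp hT hxu
      by_cases hyv : y = v
      · subst hyv; exact hxy
      · exfalso
        apply h
        obtain ⟨p, hp⟩ := hxy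
        refine ⟨Walk.cons hy p, ?_⟩
        rw [Walk.support_cons, List.mem_cons]
        rintro (h1 | h1)
        · exact hadj.ne' h1
        · exact sideComp_disjoint hT hadj hy hyv (sideComp_refl hadj.ne)
            (support_subset_sideComp p hp v h1)

lemma sideComp_partition' [DecidableEq V] (hT : G.IsTree) {u v : V} (hadj : G.Adj u v)
    (x : V) (h : x ∉ sideComp G u v) : x ∈ sideComp G v u := by
  by_contra h'
  exact h ((sideComp_partition hT hadj x).mpr h')

end Aux

section Helpers

lemma myfilter_congr {α : Type*} {s : Finset α} {P Q : α → Prop}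
    {iP : DecidablePred P} {iQ : DecidablePred Q} (h : ∀ x ∈ s, P x ↔ Q x) :
    @Finset.filter α P iP s = @Finset.filter α Q iQ s := by
  ext x
  simp only [Finset.mem_filter]
  constructor
  · rintro ⟨hxs, hx⟩; exact ⟨hxs, (h x hxs).mp hx⟩
  · rintro ⟨hxs, hx⟩; exact ⟨hxs, (h x hxs).mpr hx⟩

lemma mysum_filter_true {α : Type*} {s : Finset α} {P : α → Prop}
    {iP : DecidablePred P} (h : ∀ x ∈ s, P x) (f : α → ℝ) :
    ∑ e ∈ @Finset.filter α P iP s, f e = ∑ e ∈ s, f e := by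
  congr 1
  ext x
  simp only [Finset.mem_filter]
  exact ⟨fun h' => h'.1, fun hx => ⟨hx, h x hx⟩⟩

lemma mysum_filter_split {α : Type*} [DecidableEq α] {s : Finset α} {P Q : α → Prop}
    {iP : DecidablePred P} {iQ : DecidablePred Q} {a : α} (ha : a ∈ s) (hPa : P a)
    (hQa : ¬ Q a) (h : ∀ x ∈ s, x ≠ a → (P x ↔ Q x)) (f : α → ℝ) :
    ∑ e ∈ @Finset.filter α P iP s, f e = f a + ∑ e ∈ @Finset.filter α Q iQ s, f e := by
  have hfil : @Finset.filter α P iP s = insert a (@Finset.filter α Q iQ s) := by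
    ext x
    simp only [Finset.mem_filter, Finset.mem_insert]
    constructor
    · rintro ⟨hxs, hPx⟩
      by_cases hxa : x = a
      · exact Or.inl hxa
      · exact Or.inr ⟨hxs, (h x hxs hxa).mp hPx⟩
    · rintro (rfl | ⟨hxs, hQx⟩)
      · exact ⟨ha, hPa⟩
      · have hxa : x ≠ a := by rintro rfl; exact hQa hQx
        exact ⟨hxs, (h x hxs hxa).mpr hQx⟩
  have hnot : a ∉ @Finset.filter α Q iQ s := by
    rw [Finset.mem_filter]
    rintro ⟨-, h'⟩
    exact hQa h'
  rw [hfil, Finset.sum_insert hnot]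

lemma mysum_filter_pair {α : Type*} [DecidableEq α] {s : Finset α} {P Q : α → Prop}
    {iP : DecidablePred P} {iQ : DecidablePred Q} {a : α} (ha : a ∈ s) (hPa : P a)
    (hQa : Q a) (hcov : ∀ x ∈ s, P x ∨ Q x)
    (hint : ∀ x ∈ s, P x → Q x → x = a) (f : α → ℝ) :
    ∑ e ∈ @Finset.filter α P iP s, f e + ∑ e ∈ @Finset.filter α Q iQ s, f e
      = ∑ e ∈ s, f e + f a := by
  have hu : @Finset.filter α P iP s ∪ @Finset.filter α Q iQ s = s := by
    ext x
    simp only [Finset.mem_union, Finset.mem_filter]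
    constructor
    · rintro (⟨h1, -⟩ | ⟨h1, -⟩) <;> exact h1
    · intro hx
      rcases hcov x hx with h1 | h1
      · exact Or.inl ⟨hx, h1⟩
      · exact Or.inr ⟨hx, h1⟩
  have hi : @Finset.filter α P iP s ∩ @Finset.filter α Q iQ s = {a} := by
    ext x
    simp only [Finset.mem_inter, Finset.mem_filter, Finset.mem_singleton]
    constructor
    · rintro ⟨⟨h1, h2⟩, ⟨-, h3⟩⟩
      exact hint x h1 h2 h3
    · rintro rfl
      exact ⟨⟨ha, hPa⟩, ⟨ha, hQa⟩⟩
  have := Finset.sum_union_inter (s₁ := @Finset.filter α P iP s)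
    (s₂ := @Finset.filter α Q iQ s) (f := f)
  rw [hu, hi, Finset.sum_singleton] at this
  linarith

lemma mycard_filter_pair {α : Type*} {s : Finset α} {P Q : α → Prop}
    {iP : DecidablePred P} {iQ : DecidablePred Q} (h : ∀ x ∈ s, P x ↔ ¬ Q x) :
    (@Finset.filter α P iP s).card + (@Finset.filter α Q iQ s).card = s.card := by
  classical
  have h1 : @Finset.filter α P iP s = s.filter (fun x => ¬ Q x) :=
    myfilter_congr h
  have h2 : @Finset.filter α Q iQ s = s.filter (fun x => Q x) :=
    myfilter_congr (fun x _ => Iff.rfl)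
  rw [h1, h2, add_comm]
  exact Finset.card_filter_add_card_filter_not (fun x => Q x)

lemma mycard_filter_congr {α : Type*} {s : Finset α} {P Q : α → Prop}
    {iP : DecidablePred P} {iQ : DecidablePred Q} (h : ∀ x ∈ s, P x ↔ Q x) :
    (@Finset.filter α P iP s).card = (@Finset.filter α Q iQ s).card := by
  rw [myfilter_congr h]

end Helpers

section Aux2

open SimpleGraph

variable {G : SimpleGraph V} [Fintype V] [DecidableEq V] {ℓ : Sym2 V → ℝ}

lemma edge_mem_char (hT : G.IsTree) {u v : V} (hadj : G.Adj u v) :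
    ∀ e ∈ G.edgeFinset, e ≠ s(u, v) →
      ((∃ x ∈ e, x ∈ sideComp G u v) ↔ (∀ x ∈ e, x ∈ sideComp G u v)) := by
  intro e he hne
  induction e using Sym2.ind with
  | _ a b =>
    rw [SimpleGraph.mem_edgeFinset, SimpleGraph.mem_edgeSet] at he
    constructor
    · rintro ⟨x, hxe, hx⟩
      rcases Sym2.mem_iff.mp hxe with rfl | rfl
      · by_cases hbu : b = u
        · subst hbu
          exact absurd (by rw [adj_mem_sideComp hT hadj he.symm hx, Sym2.eq_swap]) hne
        · intro y hy
          rcases Sym2.mem_iff.mp hy with rfl | rfl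
          · exact hx
          · exact sideComp_adj hx he hbu
      · by_cases hau : a = u
        · subst hau
          exact absurd (by rw [adj_mem_sideComp hT hadj he hx]) hne
        · intro y hy
          rcases Sym2.mem_iff.mp hy with rfl | rfl
          · exact sideComp_adj hx he.symm hau
          · exact hx
    · intro h
      exact ⟨a, Sym2.mem_mk_left a b, h a (Sym2.mem_mk_left a b)⟩

lemma sideLength_eq_branchLength (hT : G.IsTree) {u v : V} (hadj : G.Adj u v)
    (ℓ : Sym2 V → ℝ) : sideLength G ℓ u v = branchLength G ℓ u v := by
  rw [sideLength, branchLength]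
  refine mysum_filter_split (a := s(u, v)) ?_ ?_ ?_ ?_ ℓ
  · rwa [SimpleGraph.mem_edgeFinset, SimpleGraph.mem_edgeSet]
  · exact ⟨v, Sym2.mem_mk_right u v, sideComp_refl hadj.ne⟩
  · intro h
    exact not_mem_sideComp G u v (h u (Sym2.mem_mk_left u v))
  · exact edge_mem_char hT hadj

lemma degree_one_neighbors {u v : V} (hadj : G.Adj u v) (hdeg : G.degree u = 1) :
    G.neighborFinset u = {v} := by
  obtain ⟨a, ha⟩ := Finset.card_eq_one.mp hdeg
  have hv : v ∈ G.neighborFinset u := (SimpleGraph.mem_neighborFinset G u v).mpr hadj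
  rw [ha, Finset.mem_singleton] at hv
  rw [ha, hv]

lemma sideComp_degree_one (hT : G.IsTree) {u v : V} (hadj : G.Adj u v)
    (hdeg : G.degree u = 1) : ∀ x, x ∈ sideComp G u v ↔ x ≠ u := by
  have hnb := degree_one_neighbors hadj hdeg
  have hCvu : ∀ x, x ∈ sideComp G v u → x = u := by
    rintro x ⟨p, hp⟩
    cases p with
    | nil => rfl
    | @cons _ y _ h q =>
      exfalso
      apply hp
      have hy : y ∈ G.neighborFinset u := (SimpleGraph.mem_neighborFinset G u y).mpr h
      rw [hnb, Finset.mem_singleton] at hy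
      subst hy
      rw [Walk.support_cons]
      exact List.mem_cons_of_mem _ q.start_mem_support
  intro x
  constructor
  · intro hx hxu
    subst hxu
    exact not_mem_sideComp _ _ _ hx
  · intro hx
    refine sideComp_partition' hT hadj.symm x ?_
    intro h
    exact hx (hCvu x h)

lemma deviation_degree_one (hT : G.IsTree) {u v : V} (hadj : G.Adj u v)
    (hdeg : G.degree u = 1) (htot : totalLength G ℓ = leafLength G) :
    deviation G ℓ u v = 0 := by
  have hu_leaf : u ∈ leafSet G := by
    exact Finset.mem_filter.mpr ⟨Finset.mem_univ _, hdeg⟩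
  have hcount : (sideLeafCount G u v : ℝ) = ((leafSet G).card : ℝ) - 1 := by
    rw [sideLeafCount]
    have h1 : ((leafSet G).filter (fun x => x ∈ sideComp G u v)).card
        = ((leafSet G).filter (fun x => x ≠ u)).card :=
      mycard_filter_congr (fun x _ => sideComp_degree_one hT hadj hdeg x)
    rw [h1, Finset.filter_ne', Finset.card_erase_of_mem hu_leaf,
      Nat.cast_sub (Finset.card_pos.mpr ⟨u, hu_leaf⟩), Nat.cast_one]
  have hlen : sideLength G ℓ u v = totalLength G ℓ := by
    rw [sideLength, totalLength]
    apply mysum_filter_true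
    intro e he
    induction e using Sym2.ind with
    | _ a b =>
      rw [SimpleGraph.mem_edgeFinset, SimpleGraph.mem_edgeSet] at he
      by_cases hau : a = u
      · refine ⟨b, Sym2.mem_mk_right a b, ?_⟩
        rw [sideComp_degree_one hT hadj hdeg b]
        rintro rfl
        exact he.ne hau
      · exact ⟨a, Sym2.mem_mk_left a b, (sideComp_degree_one hT hadj hdeg a).mpr hau⟩
  rw [deviation, hcount, hlen, htot, leafLength]
  ring

end Aux2

section Aux3

open SimpleGraph

variable {G : SimpleGraph V} [Fintype V] [DecidableEq V] {ℓ : Sym2 V → ℝ}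

lemma degree_two_neighbors {u v : V} (hadj : G.Adj u v) (hdeg : G.degree u = 2) :
    ∃ w, G.Adj u w ∧ w ≠ v ∧ G.neighborFinset u = {v, w} := by
  obtain ⟨a, b, hab, hs⟩ := Finset.card_eq_two.mp hdeg
  have hv : v ∈ G.neighborFinset u := (SimpleGraph.mem_neighborFinset G u v).mpr hadj
  rw [hs, Finset.mem_insert, Finset.mem_singleton] at hv
  rcases hv with rfl | rfl
  · exact ⟨b, (SimpleGraph.mem_neighborFinset G u b).mp
      (by rw [hs]; exact Finset.mem_insert_of_mem (Finset.mem_singleton_self b)),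
      hab.symm ∘ Eq.symm ∘ Eq.symm, by rw [hs]⟩
  · refine ⟨a, (SimpleGraph.mem_neighborFinset G u a).mp
      (by rw [hs]; exact Finset.mem_insert_self a _), hab, ?_⟩
    rw [hs, Finset.pair_comm]

lemma sideComp_degree_two (hT : G.IsTree) {u v w : V} (hadj : G.Adj u v)
    (hw : G.Adj u w) (hwv : w ≠ v) (hnb : G.neighborFinset u = {v, w}) :
    ∀ x, x ∈ sideComp G w u ↔ (x ∈ sideComp G u v ∨ x = u) := by
  intro x
  constructor
  · intro hx
    by_cases hxu : x = u
    · exact Or.inr hxu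
    · obtain ⟨y, hy, hxy⟩ := exists_adj_sideComp hT hxu
      have hym : y ∈ G.neighborFinset u := (SimpleGraph.mem_neighborFinset G u y).mpr hy
      rw [hnb, Finset.mem_insert, Finset.mem_singleton] at hym
      rcases hym with rfl | rfl
      · exact Or.inl hxy
      · exact absurd hx (fun h => no_cross hT hy hxy h)
  · rintro (hx | rfl)
    · obtain ⟨p, hp⟩ := hx
      have hwp : w ∉ p.support := by
        intro h
        exact hwv (adj_mem_sideComp hT hadj hw (support_subset_sideComp p hp w h))
      refine ⟨Walk.cons hadj p, ?_⟩
      rw [Walk.support_cons, List.mem_cons]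
      rintro (h | h)
      · exact hw.ne' h
      · exact hwp h
    · exact sideComp_refl hw.ne'

lemma sideLeafCount_degree_two (hT : G.IsTree) {u v w : V} (hadj : G.Adj u v)
    (hw : G.Adj u w) (hwv : w ≠ v) (hnb : G.neighborFinset u = {v, w})
    (hdeg : G.degree u = 2) : sideLeafCount G w u = sideLeafCount G u v := by
  rw [sideLeafCount, sideLeafCount]
  apply mycard_filter_congr
  intro x hx
  rw [sideComp_degree_two hT hadj hw hwv hnb x]
  have hxu : x ≠ u := by
    rintro rfl
    rw [leafSet, Finset.mem_filter] at hx
    have : G.degree x = 1 := hx.2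
    omega
  simp [hxu]

lemma sideLength_degree_two (hT : G.IsTree) {u v w : V} (hadj : G.Adj u v)
    (hw : G.Adj u w) (hwv : w ≠ v) (hnb : G.neighborFinset u = {v, w}) :
    sideLength G ℓ w u = ℓ s(u, w) + sideLength G ℓ u v := by
  rw [sideLength, sideLength]
  refine mysum_filter_split (a := s(u, w)) ?_ ?_ ?_ ?_ ℓ
  · rwa [SimpleGraph.mem_edgeFinset, SimpleGraph.mem_edgeSet]
  · exact ⟨u, Sym2.mem_mk_left u w,
      (sideComp_degree_two hT hadj hw hwv hnb u).mpr (Or.inr rfl)⟩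
  · rintro ⟨x, hxe, hx⟩
    rcases Sym2.mem_iff.mp hxe with rfl | rfl
    · exact not_mem_sideComp _ _ _ hx
    · exact hwv (adj_mem_sideComp hT hadj hw hx)
  · intro e he hne
    induction e using Sym2.ind with
    | _ a b =>
      rw [SimpleGraph.mem_edgeFinset, SimpleGraph.mem_edgeSet] at he
      constructor
      · rintro ⟨x, hxe, hx⟩
        rcases (sideComp_degree_two hT hadj hw hwv hnb x).mp hx with hx' | hxu
        · exact ⟨x, hxe, hx'⟩
        · -- x = u is an endpoint of e; other endpoint is a neighbor of u
          rw [hxu] at hxe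
          rcases Sym2.mem_iff.mp hxe with hau | hbu
          · have hbm : b ∈ G.neighborFinset u := by
              rw [SimpleGraph.mem_neighborFinset, hau]
              exact he
            rw [hnb, Finset.mem_insert, Finset.mem_singleton] at hbm
            rcases hbm with hbv | hbw
            · refine ⟨b, Sym2.mem_mk_right a b, ?_⟩
              rw [hbv]
              exact sideComp_refl hadj.ne
            · exact absurd (by rw [hau, hbw]) hne
          · have ham : a ∈ G.neighborFinset u := by
              rw [SimpleGraph.mem_neighborFinset, hbu]
              exact he.symm
            rw [hnb, Finset.mem_insert, Finset.mem_singleton] at ham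
            rcases ham with hav | haw
            · refine ⟨a, Sym2.mem_mk_left a b, ?_⟩
              rw [hav]
              exact sideComp_refl hadj.ne
            · exact absurd (by rw [hbu, haw]; exact Sym2.eq_swap) hne
      · rintro ⟨x, hxe, hx⟩
        exact ⟨x, hxe, (sideComp_degree_two hT hadj hw hwv hnb x).mpr (Or.inl hx)⟩

lemma deviation_degree_two (hT : G.IsTree) {u v w : V} (hadj : G.Adj u v)
    (hw : G.Adj u w) (hwv : w ≠ v) (hnb : G.neighborFinset u = {v, w})
    (hdeg : G.degree u = 2) :
    deviation G ℓ u v = ℓ s(u, w) + deviation G ℓ w u := by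
  rw [deviation, deviation, sideLeafCount_degree_two hT hadj hw hwv hnb hdeg,
    sideLength_degree_two hT hadj hw hwv hnb]
  ring

lemma deviation_add (hT : G.IsTree) (htot : totalLength G ℓ = leafLength G)
    {u v : V} (hadj : G.Adj u v) :
    deviation G ℓ u v + deviation G ℓ v u = 1 - ℓ s(u, v) := by
  have hcount : (sideLeafCount G u v) + (sideLeafCount G v u) = (leafSet G).card := by
    rw [sideLeafCount, sideLeafCount]
    exact mycard_filter_pair (fun x _ => sideComp_partition hT hadj x)
  have hlen : sideLength G ℓ u v + sideLength G ℓ v u = totalLength G ℓ + ℓ s(u, v) := by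
    rw [sideLength, sideLength, totalLength]
    refine mysum_filter_pair (a := s(u, v)) ?_ ?_ ?_ ?_ ?_ ℓ
    · rwa [SimpleGraph.mem_edgeFinset, SimpleGraph.mem_edgeSet]
    · exact ⟨v, Sym2.mem_mk_right u v, sideComp_refl hadj.ne⟩
    · exact ⟨u, Sym2.mem_mk_left u v, sideComp_refl hadj.ne'⟩
    · intro e he
      induction e using Sym2.ind with
      | _ a b =>
        by_cases h : a ∈ sideComp G u v
        · exact Or.inl ⟨a, Sym2.mem_mk_left a b, h⟩
        · exact Or.inr ⟨a, Sym2.mem_mk_left a b, sideComp_partition' hT hadj a h⟩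
    · intro e he h1 h2
      induction e using Sym2.ind with
      | _ a b =>
        rw [SimpleGraph.mem_edgeFinset, SimpleGraph.mem_edgeSet] at he
        obtain ⟨x, hxe, hx⟩ := h1
        obtain ⟨y, hye, hy⟩ := h2
        have hxy : x ≠ y := by
          rintro rfl
          exact no_cross hT hadj hx hy
        -- x and y are the two distinct endpoints a, b
        have hkey : ∀ (c d : V), G.Adj c d → c ∈ sideComp G u v → d ∈ sideComp G v u →
            s(c, d) = s(u, v) := by
          intro c d hcd hc hd
          have hdu : d = u := by
            by_contra hdu
            exact no_cross hT hadj (sideComp_adj hc hcd hdu) hd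
          subst hdu
          rw [adj_mem_sideComp hT hadj hcd.symm hc, Sym2.eq_swap]
        rcases Sym2.mem_iff.mp hxe with rfl | rfl <;>
          rcases Sym2.mem_iff.mp hye with rfl | rfl
        · exact absurd rfl hxy
        · exact hkey x y he hx hy
        · rw [Sym2.eq_swap]
          exact hkey x y he.symm hx hy
        · exact absurd rfl hxy
  have hleaf : leafLength G = ((leafSet G).card : ℝ) - 1 := rfl
  rw [deviation, deviation]
  rw [htot, hleaf] at hlen
  have : ((sideLeafCount G u v : ℝ)) + (sideLeafCount G v u : ℝ) = ((leafSet G).card : ℝ) := by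
    exact_mod_cast congrArg (Nat.cast : ℕ → ℝ) hcount
  linarith

lemma deviation_nonneg (hT : G.IsTree) (hℓ : ∀ e ∈ G.edgeSet, 0 < ℓ e)
    (hsb : ShortBranched G ℓ) :
    ∀ (n : ℕ) (u v : V), (Finset.univ.filter (fun x => x ∈ sideComp G v u)).card ≤ n →
      G.Adj u v → 0 ≤ deviation G ℓ u v := by
  intro n
  induction n with
  | zero =>
    intro u v hc hadj
    exfalso
    have hu : u ∈ Finset.univ.filter (fun x => x ∈ sideComp G v u) := by
      rw [Finset.mem_filter]
      exact ⟨Finset.mem_univ u, sideComp_refl hadj.ne'⟩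
    have := Finset.card_pos.mpr ⟨u, hu⟩
    omega
  | succ n ih =>
    intro u v hc hadj
    rcases lt_or_ge (G.degree u) 3 with hd | hd
    · have h1 : 0 < G.degree u := (G.degree_pos_iff_exists_adj u).mpr ⟨v, hadj⟩
      interval_cases hdeg : G.degree u
      · rw [deviation_degree_one hT hadj hdeg hsb.1]
      · obtain ⟨w, hw, hwv, hnb⟩ := degree_two_neighbors hadj hdeg
        rw [deviation_degree_two hT hadj hw hwv hnb hdeg]
        have hcard : (Finset.univ.filter (fun x => x ∈ sideComp G u w)).card ≤ n := by
          have hss : Finset.univ.filter (fun x => x ∈ sideComp G u w)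
              ⊂ Finset.univ.filter (fun x => x ∈ sideComp G v u) := by
            rw [Finset.ssubset_iff_of_subset]
            · refine ⟨u, ?_, ?_⟩
              · rw [Finset.mem_filter]
                exact ⟨Finset.mem_univ u, sideComp_refl hadj.ne'⟩
              · rw [Finset.mem_filter]
                rintro ⟨-, h⟩
                exact not_mem_sideComp _ _ _ h
            · intro x hx
              rw [Finset.mem_filter] at hx ⊢
              refine ⟨Finset.mem_univ x, ?_⟩
              refine sideComp_partition' hT hadj x ?_
              intro h
              exact sideComp_disjoint hT hadj hw hwv h hx.2
          have := Finset.card_lt_card hss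
          omega
        have h2 := ih w u hcard hw.symm
        have h3 : 0 < ℓ s(u, w) := hℓ _ hw
        linarith
    · have hb := hsb.2 u v hd hadj
      rw [deviation, sideLength_eq_branchLength hT hadj]
      linarith

end Aux3

/-- **The barycentric factors are well defined** (Corollary of Lemma A.4): for adjacent
vertices `u` and `v` of a short-branched tree with strictly positive edge lengths,
`1 - D(v,u)` is strictly positive and `D(u,v)/(1 - D(v,u))` lies between `0` and `1`. -/
theorem barycentric_factor_bounds [Fintype V] [DecidableEq V] (G : SimpleGraph V)
    (ℓ : Sym2 V → ℝ) (hT : G.IsTree) (hV : 1 < Fintype.card V)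
    (hℓ : ∀ e ∈ G.edgeSet, 0 < ℓ e) (hsb : ShortBranched G ℓ)
    (u v : V) (hadj : G.Adj u v) :
    0 < 1 - deviation G ℓ v u ∧
      0 ≤ deviation G ℓ u v / (1 - deviation G ℓ v u) ∧
      deviation G ℓ u v / (1 - deviation G ℓ v u) ≤ 1 := by
  have h1 : 0 ≤ deviation G ℓ u v :=
    deviation_nonneg hT hℓ hsb _ u v le_rfl hadj
  have h2 : 0 ≤ deviation G ℓ v u :=
    deviation_nonneg hT hℓ hsb _ v u le_rfl hadj.symm
  have hs := deviation_add hT hsb.1 hadj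
  have hp : 0 < ℓ s(u, v) := hℓ _ hadj
  have hpos : 0 < 1 - deviation G ℓ v u := by linarith
  refine ⟨hpos, div_nonneg h1 hpos.le, ?_⟩
  rw [div_le_one hpos]
  linarith
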